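/- Let K > 0, ε* > 0, α, β be real constants, and let Φ : ℝ → ℝ be a twice continuously differentiable function satisfying Φ''(s) = ε* e^{-Φ(s)/K} for all s ∈ ℝ with Φ(0) = α and Φ'(0) = β. Then Φ(s) → +∞ as s → +∞ and Φ(s) → +∞ as s → -∞. -/

import Mathlib

open Filter Set

private lemma lin_lb_Ici (f : ℝ → ℝ) (hf : Differentiable ℝ f) (a m : ℝ)
    (h : ∀ s, a ≤ s → m ≤ deriv f s) :
    ∀ s, a ≤ s → f a + m * (s - a) ≤ f s := by
  intro s hs
  set g : ℝ → ℝ := fun x => f x - m * x with hg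
  have hgd : Differentiable ℝ g := hf.sub (differentiable_id.const_mul m)
  have hgder : ∀ x, deriv g x = deriv f x - m := by
    intro x
    have : HasDerivAt g (deriv f x - m) x := by
      exact ((hf x).hasDerivAt.sub ((hasDerivAt_id' x).const_mul m)).congr_deriv (by ring)
    exact this.deriv
  have hmono : MonotoneOn g (Ici a) := by
    apply monotoneOn_of_deriv_nonneg (convex_Ici a) hgd.continuous.continuousOn
      hgd.differentiableOn
    intro x hx
    rw [interior_Ici] at hx
    rw [hgder]
    have := h x (le_of_lt hx)
    linarith
  have := hmono self_mem_Ici (show s ∈ Ici a from hs) hs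
  simp only [hg] at this
  nlinarith

private lemma lin_lb_Iic (f : ℝ → ℝ) (hf : Differentiable ℝ f) (a m : ℝ)
    (h : ∀ s, s ≤ a → deriv f s ≤ m) :
    ∀ s, s ≤ a → f a + m * (s - a) ≤ f s := by
  intro s hs
  set g : ℝ → ℝ := fun x => f x - m * x with hg
  have hgd : Differentiable ℝ g := hf.sub (differentiable_id.const_mul m)
  have hgder : ∀ x, deriv g x = deriv f x - m := by
    intro x
    have : HasDerivAt g (deriv f x - m) x := by
      exact ((hf x).hasDerivAt.sub ((hasDerivAt_id' x).const_mul m)).congr_deriv (by ring)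
    exact this.deriv
  have hanti : AntitoneOn g (Iic a) := by
    apply antitoneOn_of_deriv_nonpos (convex_Iic a) hgd.continuous.continuousOn
      hgd.differentiableOn
    intro x hx
    rw [interior_Iic] at hx
    rw [hgder]
    have := h x (le_of_lt hx)
    linarith
  have := hanti (show s ∈ Iic a from hs) self_mem_Iic hs
  simp only [hg] at this
  nlinarith

private lemma lin_ub_Iic (f : ℝ → ℝ) (hf : Differentiable ℝ f) (a m : ℝ)
    (h : ∀ s, s ≤ a → m ≤ deriv f s) :
    ∀ s, s ≤ a → f s ≤ f a + m * (s - a) := by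
  intro s hs
  set g : ℝ → ℝ := fun x => f x - m * x with hg
  have hgd : Differentiable ℝ g := hf.sub (differentiable_id.const_mul m)
  have hgder : ∀ x, deriv g x = deriv f x - m := by
    intro x
    have : HasDerivAt g (deriv f x - m) x := by
      exact ((hf x).hasDerivAt.sub ((hasDerivAt_id' x).const_mul m)).congr_deriv (by ring)
    exact this.deriv
  have hmono : MonotoneOn g (Iic a) := by
    apply monotoneOn_of_deriv_nonneg (convex_Iic a) hgd.continuous.continuousOn
      hgd.differentiableOn
    intro x hx
    rw [interior_Iic] at hx
    rw [hgder]
    have := h x (le_of_lt hx)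
    linarith
  have := hmono (show s ∈ Iic a from hs) self_mem_Iic hs
  simp only [hg] at this
  nlinarith

/-- Any global C² solution of `Φ'' = ε* e^{-Φ/K}` with
`Φ(0) = α`, `Φ'(0) = β` tends to `+∞` as `s → +∞` and as `s → -∞`. -/
theorem ode_solution_tendsto_infty
    (K ε α β : ℝ) (hK : 0 < K) (hε : 0 < ε)
    (Φ : ℝ → ℝ) (hΦ : ContDiff ℝ 2 Φ)
    (hODE : ∀ s : ℝ, deriv (deriv Φ) s = ε * Real.exp (-Φ s / K))
    (h0 : Φ 0 = α) (h0' : deriv Φ 0 = β) :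
    Filter.Tendsto Φ Filter.atTop Filter.atTop ∧
      Filter.Tendsto Φ Filter.atBot Filter.atTop := by
  have hd : Differentiable ℝ Φ := hΦ.differentiable (by norm_num)
  have hΦ2 : ContDiff ℝ ((1 : ℕ) + 1) Φ := by exact_mod_cast hΦ
  have hd' : Differentiable ℝ (deriv Φ) :=
    ((contDiff_succ_iff_deriv.mp hΦ2).2.2).differentiable (by norm_num)
  have hmono : StrictMono (deriv Φ) := by
    apply strictMono_of_deriv_pos
    intro x
    rw [hODE x]
    positivity
  obtain ⟨c, hcdef⟩ : ∃ c : ℝ, c = ε * Real.exp (-α / K) := ⟨_, rfl⟩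
  have hc : (0:ℝ) < c := by rw [hcdef]; positivity
  -- generic: exponent lower bound when Φ s ≤ α
  have hexp : ∀ s, Φ s ≤ α → c ≤ deriv (deriv Φ) s := by
    intro s hs
    rw [hODE s, hcdef]
    have h1 : -α / K ≤ -Φ s / K := (div_le_div_iff_of_pos_right hK).mpr (by linarith)
    have := Real.exp_le_exp.mpr h1
    exact mul_le_mul_of_nonneg_left this hε.le
  -- there exists s₀ with deriv Φ s₀ > 0
  have hpos : ∃ s₀, 0 < deriv Φ s₀ := by
    by_contra hcon
    push_neg at hcon
    have hanti : Antitone Φ := antitone_of_deriv_nonpos hd hcon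
    have hkey : ∀ s, (0:ℝ) ≤ s → c ≤ deriv (deriv Φ) s := fun s hs =>
      hexp s (h0 ▸ hanti hs)
    have hlb := lin_lb_Ici (deriv Φ) hd' 0 c hkey
    have htpos : 0 ≤ (|β| + 1) / c := by positivity
    have h1 := hlb ((|β| + 1) / c) htpos
    rw [h0'] at h1
    have h2 : c * ((|β| + 1) / c - 0) = |β| + 1 := by
      field_simp; ring
    have h3 := hcon ((|β| + 1) / c)
    have := abs_nonneg β
    have := neg_abs_le β
    nlinarith
  -- there exists s₁ with deriv Φ s₁ < 0
  have hneg : ∃ s₁, deriv Φ s₁ < 0 := by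
    by_contra hcon
    push_neg at hcon
    have hmon : Monotone Φ := monotone_of_deriv_nonneg hd hcon
    have hkey : ∀ s, s ≤ (0:ℝ) → c ≤ deriv (deriv Φ) s := fun s hs =>
      hexp s (h0 ▸ hmon hs)
    have hub := lin_ub_Iic (deriv Φ) hd' 0 c hkey
    have htneg : -((|β| + 1) / c) ≤ 0 := by
      have : 0 ≤ (|β| + 1) / c := by positivity
      linarith
    have h1 := hub (-((|β| + 1) / c)) htneg
    rw [h0'] at h1
    have h2 : c * (-((|β| + 1) / c) - 0) = -(|β| + 1) := by
      field_simp; ring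
    rw [h2] at h1
    have h3 := hcon (-((|β| + 1) / c))
    have := abs_nonneg β
    have := le_abs_self β
    linarith
  obtain ⟨s₀, hs₀⟩ := hpos
  obtain ⟨s₁, hs₁⟩ := hneg
  constructor
  · -- atTop
    set m := deriv Φ s₀ with hm
    have hkey : ∀ s, s₀ ≤ s → m ≤ deriv Φ s := fun s hs => (hmono.le_iff_le).mpr hs
    have hlb := lin_lb_Ici Φ hd s₀ m hkey
    apply tendsto_atTop_mono' _ (_ : ∀ᶠ s in atTop, Φ s₀ + m * (s - s₀) ≤ Φ s)
    · have h1 : Tendsto (fun s : ℝ => m * s) atTop atTop :=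
        Tendsto.const_mul_atTop hs₀ tendsto_id
      have h2 : Tendsto (fun s : ℝ => Φ s₀ - m * s₀ + m * s) atTop atTop :=
        tendsto_atTop_add_const_left _ _ h1
      exact h2.congr (by intro s; ring)
    · filter_upwards [eventually_ge_atTop s₀] with s hs using hlb s hs
  · -- atBot
    set m := deriv Φ s₁ with hm
    have hkey : ∀ s, s ≤ s₁ → deriv Φ s ≤ m := fun s hs => (hmono.le_iff_le).mpr hs
    have hlb := lin_lb_Iic Φ hd s₁ m hkey
    apply tendsto_atTop_mono' _ (_ : ∀ᶠ s in atBot, Φ s₁ + m * (s - s₁) ≤ Φ s)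
    · have h1 : Tendsto (fun s : ℝ => (-m) * s) atTop atTop :=
        Tendsto.const_mul_atTop (by linarith) tendsto_id
      have h2 : Tendsto (fun s : ℝ => (-m) * (-s)) atBot atTop :=
        h1.comp tendsto_neg_atBot_atTop
      have h3 : Tendsto (fun s : ℝ => m * s) atBot atTop :=
        h2.congr (by intro s; ring)
      have h4 : Tendsto (fun s : ℝ => Φ s₁ - m * s₁ + m * s) atBot atTop :=
        tendsto_atTop_add_const_left _ _ h3
      exact h4.congr (by intro s; ring)
    · filter_upwards [eventually_le_atBot s₁] with s hs using hlb s hs
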